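/- Fix X ∈ ℝ^{n×p} and let Λ be a finite set of positive reals with minimum element λ_min and maximum element λ_max := max_{2≤j≤p}|X_jᵀX₁|/n. For each λ ∈ Λ let γ̂(λ) be a node-wise Lasso solution with parameter λ, with τ̃²(λ) := (1/n)‖X₁ − X₋₁γ̂(λ)‖² > 0, τ̂²(λ) := τ̃²(λ) + λ‖γ̂(λ)‖₁, Θ̂₁(λ) := (1/τ̂²(λ))(1, −γ̂(λ)ᵀ)ᵀ, Ω̂₁,₁(λ) := Θ̂₁(λ)ᵀΣ̂Θ̂₁(λ), and f(λ) := ‖Σ̂Θ̂₁(λ) − e₁‖_∞/Ω̂₁,₁(λ)^{1/2}. Assume λ ↦ τ̃²(λ) is nondecreasing on Λ and γ̂(λ_max) = 0. Let η* := τ̃(λ_CV)/√n for some λ_CV ∈ Λ, and define λ₁ by the STPS rule: if f(λ) > η* for all λ ∈ Λ set λ₁ := λ_min; otherwise set λ* := argmin{Ω̂₁,₁(λ)^{1/2} : λ ∈ Λ, f(λ) ≤ η*}, Ω* := 1.1·Ω̂₁,₁(λ*)^{1/2}, λ₁ := argmin{f(λ) : λ ∈ Λ, Ω̂₁,₁(λ)^{1/2}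 ≤ Ω*}. Then f(λ₁) ≤ max{ λ_min/τ̃(λ_min), (1/√n)·((1/n)‖X₁‖²)^{1/2} }. -/

import Mathlib

open MeasureTheory ProbabilityTheory Filter Finset Matrix Topology

noncomputable section

/-- Squared Euclidean norm of a vector in `ℝ^m`. -/
def sqNorm {m : ℕ} (v : Fin m → ℝ) : ℝ := ∑ i, (v i) ^ 2

/-- ℓ¹ norm of a vector in `ℝ^m`. -/
def l1Norm {m : ℕ} (v : Fin m → ℝ) : ℝ := ∑ i, |v i|

/-- ℓ^∞ norm (maximum absolute entry) of a vector in `ℝ^m`. -/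
def supNorm {m : ℕ} (v : Fin m → ℝ) : ℝ := ⨆ i, |v i|

/-- First entry of a vector (0 if the vector is empty). -/
def fstEntry {P : ℕ} (v : Fin P → ℝ) : ℝ := if h : 0 < P then v ⟨0, h⟩ else 0

/-- Index of the (j+2)-nd column, as an element of `Fin P`, for `j : Fin (P-1)`. -/
def colIdx {P : ℕ} (j : Fin (P - 1)) : Fin P := ⟨j.1 + 1, by have := j.isLt; omega⟩

/-- First column of the design matrix `X` (rows indexed by `Fin n`, columns by `Fin P`). -/
def col0 {n P : ℕ} (X : Fin n → Fin P → ℝ) : Fin n → ℝ := fun i => fstEntry (X i)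

/-- Residual `X₁ - X₋₁ γ` of the node-wise regression of the first column on the others. -/
def nwRes {n P : ℕ} (X : Fin n → Fin P → ℝ) (g : Fin (P - 1) → ℝ) : Fin n → ℝ :=
  fun i => col0 X i - ∑ j : Fin (P - 1), X i (colIdx j) * g j

/-- Node-wise Lasso objective `(1/n)‖X₁ - X₋₁γ‖² + 2λ‖γ‖₁`. -/
def nwObj {n P : ℕ} (X : Fin n → Fin P → ℝ) (lam : ℝ) (g : Fin (P - 1) → ℝ) : ℝ :=
  (1 / n) * sqNorm (nwRes X g) + 2 * lam * l1Norm g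

/-- `g` is a node-wise Lasso solution with tuning parameter `lam`. -/
def IsNodewiseSol {n P : ℕ} (X : Fin n → Fin P → ℝ) (lam : ℝ) (g : Fin (P - 1) → ℝ) : Prop :=
  ∀ γ : Fin (P - 1) → ℝ, nwObj X lam g ≤ nwObj X lam γ

/-- `τ̃² := (1/n)‖X₁ - X₋₁γ̂‖²`. -/
def tauTildeSq {n P : ℕ} (X : Fin n → Fin P → ℝ) (g : Fin (P - 1) → ℝ) : ℝ :=
  (1 / n) * sqNorm (nwRes X g)

/-- `τ̂² := τ̃² + λ‖γ̂‖₁`. -/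
def tauHatSq {n P : ℕ} (X : Fin n → Fin P → ℝ) (lam : ℝ) (g : Fin (P - 1) → ℝ) : ℝ :=
  tauTildeSq X g + lam * l1Norm g

/-- `Θ̂₁ := (1/τ̂²)(1, -γ̂ᵀ)ᵀ ∈ ℝ^P`. -/
def thetaHat {n P : ℕ} (X : Fin n → Fin P → ℝ) (lam : ℝ) (g : Fin (P - 1) → ℝ) :
    Fin P → ℝ :=
  fun j =>
    if h : j.1 = 0 then 1 / tauHatSq X lam g
    else -(g ⟨j.1 - 1, by have := j.isLt; omega⟩) / tauHatSq X lam g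

/-- Sample covariance matrix `Σ̂ := XᵀX/n`. -/
def sigmaHat {n P : ℕ} (X : Fin n → Fin P → ℝ) : Fin P → Fin P → ℝ :=
  fun j k => (1 / n) * ∑ i, X i j * X i k

/-- The vector `Σ̂Θ̂₁ - e₁`. -/
def biasVec {n P : ℕ} (X : Fin n → Fin P → ℝ) (lam : ℝ) (g : Fin (P - 1) → ℝ) :
    Fin P → ℝ :=
  fun j => (∑ k, sigmaHat X j k * thetaHat X lam g k) - (if j.1 = 0 then 1 else 0)

/-- `Ω̂₁,₁ := Θ̂₁ᵀ Σ̂ Θ̂₁`. -/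
def omegaHat {n P : ℕ} (X : Fin n → Fin P → ℝ) (lam : ℝ) (g : Fin (P - 1) → ℝ) : ℝ :=
  ∑ j, ∑ k, thetaHat X lam g j * sigmaHat X j k * thetaHat X lam g k

/-- Bias factor `f(λ) := ‖Σ̂Θ̂₁ - e₁‖_∞ / Ω̂₁,₁^{1/2}`. -/
def biasFactor {n P : ℕ} (X : Fin n → Fin P → ℝ) (lam : ℝ) (g : Fin (P - 1) → ℝ) : ℝ :=
  supNorm (biasVec X lam g) / Real.sqrt (omegaHat X lam g)

/-- Restricted maximum eigenvalue `φ_max(s)` of the sample covariance of `X`. -/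
def phiMax {n P : ℕ} (X : Fin n → Fin P → ℝ) (s : ℕ) : ℝ :=
  sSup {r : ℝ | ∃ z : Fin P → ℝ, z ≠ 0 ∧ {j : Fin P | z j ≠ 0}.ncard ≤ s ∧
    r = sqNorm (fun i => ∑ j, X i j * z j) / (n * sqNorm z)}

/-- Restricted minimum eigenvalue `φ_min(s)` of the sample covariance of `X`. -/
def phiMin {n P : ℕ} (X : Fin n → Fin P → ℝ) (s : ℕ) : ℝ :=
  sInf {r : ℝ | ∃ z : Fin P → ℝ, z ≠ 0 ∧ {j : Fin P | z j ≠ 0}.ncard ≤ s ∧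
    r = sqNorm (fun i => ∑ j, X i j * z j) / (n * sqNorm z)}

/-- Restricted eigenvalue `κ(s,c₀)²` of Bickel–Ritov–Tsybakov. -/
def kappaSq {n P : ℕ} (X : Fin n → Fin P → ℝ) (s : ℕ) (c0 : ℝ) : ℝ :=
  sInf {r : ℝ | ∃ S : Finset (Fin P), S.card ≤ s ∧ ∃ z : Fin P → ℝ, z ≠ 0 ∧
    (∑ j ∈ Sᶜ, |z j|) ≤ c0 * ∑ j ∈ S, |z j| ∧
    r = sqNorm (fun i => ∑ j, X i j * z j) / (n * ∑ j ∈ S, (z j) ^ 2)}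

/-- The columns of `X` are in general position. -/
def InGeneralPosition {n P : ℕ} (X : Fin n → Fin P → ℝ) : Prop :=
  ∀ k : ℕ, k < min n P → ∀ ι : Fin (k + 1) → Fin P, Function.Injective ι →
    ∀ σ : Fin (k + 1) → ℝ, (∀ l, σ l = 1 ∨ σ l = -1) →
      ∀ i : Fin P, i ∉ Set.range ι → ∀ s : ℝ, s = 1 ∨ s = -1 →
        (s • fun r => X r i) ∉
          affineSpan ℝ (Set.range fun l => σ l • fun r => X r (ι l))

/-- `b` is a Lasso solution for response `Y`, design `X`, tuning parameter `lam`. -/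
def IsLassoSol {n P : ℕ} (X : Fin n → Fin P → ℝ) (Y : Fin n → ℝ) (lam : ℝ)
    (b : Fin P → ℝ) : Prop :=
  ∀ β : Fin P → ℝ,
    (1 / n) * sqNorm (fun i => Y i - ∑ j, X i j * b j) + 2 * lam * l1Norm b ≤
      (1 / n) * sqNorm (fun i => Y i - ∑ j, X i j * β j) + 2 * lam * l1Norm β

/-- The debiased Lasso `b̂₁ := β̂₁ + (1/n)Θ̂₁ᵀXᵀ(Y - Xβ̂)`. -/
def debiasedLasso {n P : ℕ} (X : Fin n → Fin P → ℝ) (Y : Fin n → ℝ)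
    (Theta : Fin P → ℝ) (bh : Fin P → ℝ) : ℝ :=
  fstEntry bh + (1 / n) * ∑ j, Theta j * ∑ i, X i j * (Y i - ∑ k, X i k * bh k)

/-- `W₁ := (1/√n)Θ̂₁ᵀXᵀε`. -/
def W1 {n P : ℕ} (X : Fin n → Fin P → ℝ) (Theta : Fin P → ℝ) (e : Fin n → ℝ) : ℝ :=
  (1 / Real.sqrt n) * ∑ j, Theta j * ∑ i, X i j * e i

/-- `Δ₁ := √n (Σ̂Θ̂₁ - e₁)ᵀ(β₀ - β̂)`. -/
def Delta1 {n P : ℕ} (X : Fin n → Fin P → ℝ) (Theta : Fin P → ℝ)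
    (b0 bh : Fin P → ℝ) : ℝ :=
  Real.sqrt n * ∑ j, ((∑ k, sigmaHat X j k * Theta k) - (if j.1 = 0 then 1 else 0)) *
    (b0 j - bh j)

/-- Standard normal cumulative distribution function. -/
def gaussCdf (z : ℝ) : ℝ := ((gaussianReal 0 1) (Set.Iic z)).toReal


lemma sum_split {p : ℕ} (hp : 0 < p) (F : Fin p → ℝ) :
    ∑ k, F k = F ⟨0, hp⟩ + ∑ j : Fin (p-1), F (colIdx j) := by
  obtain ⟨q, rfl⟩ : ∃ q, p = q + 1 := ⟨p - 1, by omega⟩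
  rw [Fin.sum_univ_succ]
  rfl
lemma kkt {n p : ℕ} (X : Fin n → Fin p → ℝ) (hn : 1 ≤ n) {lam : ℝ} (hlam : 0 < lam)
    {g : Fin (p-1) → ℝ} (hg : IsNodewiseSol X lam g) (j : Fin (p-1)) :
    |(1/(n:ℝ)) * ∑ i, X i (colIdx j) * nwRes X g i| ≤ lam ∧
    g j * ((1/(n:ℝ)) * ∑ i, X i (colIdx j) * nwRes X g i) = lam * |g j| := by
  set x : Fin n → ℝ := fun i => X i (colIdx j) with hx
  set r : Fin n → ℝ := nwRes X g with hr
  set a : ℝ := (1/(n:ℝ)) * ∑ i, x i * r i with ha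
  set c : ℝ := (1/(n:ℝ)) * ∑ i, (x i)^2 with hc
  have hnpos : (0:ℝ) < n := by exact_mod_cast Nat.lt_of_lt_of_le Nat.zero_lt_one hn
  have hcnn : 0 ≤ c := by
    apply mul_nonneg (by positivity)
    exact Finset.sum_nonneg fun i _ => sq_nonneg _
  have key : ∀ t : ℝ, 0 ≤ t^2 * c - 2*t*a + 2*lam*(|g j + t| - |g j|) := by
    intro t
    have hres : ∀ i, nwRes X (Function.update g j (g j + t)) i = r i - t * x i := by
      intro i
      have h1 : ∀ k : Fin (p-1), X i (colIdx k) * Function.update g j (g j + t) k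
          = X i (colIdx k) * g k + (if k = j then t * X i (colIdx j) else 0) := by
        intro k
        rcases eq_or_ne k j with rfl | hk
        · simp [Function.update_self]; ring
        · rw [Function.update_of_ne hk, if_neg hk, add_zero]
      have h2 : ∑ k, X i (colIdx k) * Function.update g j (g j + t) k
          = (∑ k, X i (colIdx k) * g k) + t * X i (colIdx j) := by
        rw [Finset.sum_congr rfl (fun k _ => h1 k), Finset.sum_add_distrib,
          Finset.sum_ite_eq' Finset.univ j (fun _ => t * X i (colIdx j))]
        simp
      show col0 X i - (∑ k, X i (colIdx k) * Function.update g j (g j + t) k)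
          = r i - t * x i
      rw [h2, hr, hx]
      simp only [nwRes]
      ring
    have hsq : sqNorm (fun i => r i - t * x i)
        = sqNorm r - 2*t*(∑ i, x i * r i) + t^2 * ∑ i, (x i)^2 := by
      unfold sqNorm
      have h1 : ∀ i : Fin n, (r i - t * x i)^2
          = (r i)^2 + ((-2*t)*(x i * r i) + t^2 * (x i)^2) := fun i => by ring
      rw [Finset.sum_congr rfl (fun i _ => h1 i), Finset.sum_add_distrib,
        Finset.sum_add_distrib, ← Finset.mul_sum, ← Finset.mul_sum]
      ring
    have hl1 : l1Norm (Function.update g j (g j + t)) = l1Norm g - |g j| + |g j + t| := by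
      unfold l1Norm
      have h1 : ∀ k : Fin (p-1), |Function.update g j (g j + t) k|
          = |g k| + (if k = j then |g j + t| - |g j| else 0) := by
        intro k
        rcases eq_or_ne k j with rfl | hk
        · simp [Function.update_self]
        · rw [Function.update_of_ne hk, if_neg hk, add_zero]
      rw [Finset.sum_congr rfl (fun k _ => h1 k), Finset.sum_add_distrib,
        Finset.sum_ite_eq' Finset.univ j]
      simp; ring
    have hobj := hg (Function.update g j (g j + t))
    have hexp : nwObj X lam (Function.update g j (g j + t))
        = nwObj X lam g + ((1/(n:ℝ)) * (t^2 * ∑ i, (x i)^2 - 2*t*(∑ i, x i * r i))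
          + 2*lam*(|g j + t| - |g j|)) := by
      unfold nwObj
      have : sqNorm (nwRes X (Function.update g j (g j + t)))
          = sqNorm (fun i => r i - t * x i) := by
        unfold sqNorm; exact Finset.sum_congr rfl fun i _ => by rw [hres]
      rw [this, hsq, hl1]
      ring
    rw [hexp] at hobj
    have h3 : 0 ≤ (1/(n:ℝ)) * (t^2 * ∑ i, (x i)^2 - 2*t*(∑ i, x i * r i))
          + 2*lam*(|g j + t| - |g j|) := by linarith
    calc (0:ℝ) ≤ _ := h3
      _ = t^2 * c - 2*t*a + 2*lam*(|g j + t| - |g j|) := by rw [ha, hc]; ring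
  have hfrac : ∀ ε : ℝ, 0 < ε → (2*ε/(c+1)) * c / 2 ≤ ε := by
    intro ε hε
    have h1 : c/(c+1) ≤ 1 := (div_le_one (by linarith)).2 (by linarith)
    have h2 : (2*ε/(c+1)) * c / 2 = ε * (c/(c+1)) := by ring
    rw [h2]
    nlinarith
  have habs : |a| ≤ lam := by
    have h1 : ∀ t : ℝ, 0 < t → |a| ≤ lam + t * c / 2 := by
      intro t ht
      have k1 := key t
      have k2 := key (-t)
      have e1 : |g j + t| - |g j| ≤ t := by
        have h := abs_add_le (g j) t; rw [abs_of_pos ht] at h; linarith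
      have e2 : |g j + -t| - |g j| ≤ t := by
        have h := abs_add_le (g j) (-t); rw [abs_neg, abs_of_pos ht] at h; linarith
      have m1 : 2*lam*(|g j + t| - |g j|) ≤ 2*lam*t := by nlinarith
      have m2 : 2*lam*(|g j + -t| - |g j|) ≤ 2*lam*t := by nlinarith
      have b1 : a ≤ lam + t * c / 2 := by nlinarith
      have b2 : -a ≤ lam + t * c / 2 := by nlinarith
      exact abs_le.2 ⟨by linarith, b1⟩
    refine le_of_forall_pos_le_add fun ε hε => ?_
    have h2 := h1 (2*ε/(c+1)) (by positivity)
    have h3 := hfrac ε hε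
    linarith
  refine ⟨habs, ?_⟩
  rcases eq_or_ne (g j) 0 with h0 | h0
  · simp [h0]
  · set s : ℝ := if 0 < g j then 1 else -1 with hs
    have hss : s^2 = 1 := by
      rcases ite_eq_or_eq (0 < g j) (1:ℝ) (-1) with h | h <;> rw [hs, h] <;> norm_num
    have hsg : s * g j = |g j| := by
      rcases lt_trichotomy (g j) 0 with h | h | h
      · rw [hs, if_neg (by linarith), abs_of_neg h]; ring
      · exact absurd h h0
      · rw [hs, if_pos h, abs_of_pos h]; ring
    have hgpos : 0 < |g j| := abs_pos.2 h0
    have h2 : ∀ ε : ℝ, 0 < ε → ε < |g j| → lam ≤ s * a + ε * c / 2 := by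
      intro ε hε hεg
      have k1 := key (-(ε*s))
      have habs2 : |g j + -(ε*s)| = |g j| - ε := by
        rcases lt_trichotomy (g j) 0 with h | h | h
        · rw [hs, if_neg (by linarith)]
          rw [abs_of_neg h] at hεg ⊢
          rw [abs_of_neg (by linarith : g j + -(ε * (-1)) < 0)]; ring
        · exact absurd h h0
        · rw [hs, if_pos h]
          rw [abs_of_pos h] at hεg ⊢
          rw [abs_of_pos (by linarith : 0 < g j + -(ε * 1))]; ring
      have he : (-(ε*s))^2 * c = ε^2 * c := by
        have h4 : (-(ε*s))^2 = ε^2 * s^2 := by ring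
        rw [h4, hss, mul_one]
      rw [habs2, he] at k1
      nlinarith [k1, hε, mul_pos hε hε]
    have hlsa : lam ≤ s * a := by
      refine le_of_forall_pos_le_add fun ε hε => ?_
      set δ : ℝ := min (|g j|/2) (2*ε/(c+1)) with hδ
      have hδpos : 0 < δ := lt_min (by linarith) (by positivity)
      have hδlt : δ < |g j| := lt_of_le_of_lt (min_le_left _ _) (by linarith)
      have h3 := h2 δ hδpos hδlt
      have h4 : δ * c / 2 ≤ ε := by
        have h5 : δ ≤ 2*ε/(c+1) := min_le_right _ _
        have h6 : δ * c ≤ (2*ε/(c+1)) * c := by nlinarith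
        have h7 := hfrac ε hε
        linarith
      linarith
    have hsal : s * a ≤ lam := by
      have h4 : s * a ≤ |a| := by
        calc s * a ≤ |s * a| := le_abs_self _
          _ = |s| * |a| := abs_mul s a
          _ = |a| := by rcases ite_eq_or_eq (0 < g j) (1:ℝ) (-1) with h | h <;>
            rw [hs, h] <;> simp
      linarith
    have hsaeq : s * a = lam := le_antisymm hsal hlsa
    linear_combination (-(g j * a)) * hss + (s * g j) * hsaeq + lam * hsg
lemma biasFactor_le {n p : ℕ} (X : Fin n → Fin p → ℝ) (hn : 1 ≤ n) (hp : 2 ≤ p)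
    {lam : ℝ} (hlam : 0 < lam) {g : Fin (p-1) → ℝ} (hg : IsNodewiseSol X lam g)
    (hτ : 0 < tauTildeSq X g) :
    biasFactor X lam g ≤ lam / Real.sqrt (tauTildeSq X g) := by
  have hppos : 0 < p := by omega
  have hnpos : (0:ℝ) < n := by exact_mod_cast Nat.lt_of_lt_of_le Nat.zero_lt_one hn
  set T : ℝ := tauHatSq X lam g with hT
  have hl1nn : 0 ≤ l1Norm g := Finset.sum_nonneg fun i _ => abs_nonneg _
  have hTpos : 0 < T := by
    have : 0 ≤ lam * l1Norm g := mul_nonneg hlam.le hl1nn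
    unfold T; unfold tauHatSq; linarith
  set r : Fin n → ℝ := nwRes X g with hr
  -- a j : correlation of column j+1 with residual
  set a : Fin (p-1) → ℝ := fun j => (1/(n:ℝ)) * ∑ i, X i (colIdx j) * r i with haa
  have hkkt := fun j => kkt X hn hlam hg j
  -- θ row sums
  have hcol0 : ∀ i, col0 X i = X i ⟨0, hppos⟩ := by
    intro i; simp [col0, fstEntry, hppos]
  have hθ0 : thetaHat X lam g ⟨0, hppos⟩ = 1 / T := by
    simp [thetaHat]; rfl
  have hθc : ∀ j : Fin (p-1), thetaHat X lam g (colIdx j) = -(g j) / T := by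
    intro j
    have h1 : (colIdx j : Fin p).1 = j.1 + 1 := rfl
    have : ¬ ((colIdx j : Fin p).1 = 0) := by omega
    simp only [thetaHat, dif_neg this]
    congr 2
  have hθsum : ∀ i, ∑ k, X i k * thetaHat X lam g k = r i / T := by
    intro i
    rw [sum_split hppos (fun k => X i k * thetaHat X lam g k), hθ0]
    have h1 : ∀ j : Fin (p-1), X i (colIdx j) * thetaHat X lam g (colIdx j)
        = -(X i (colIdx j) * g j) / T := by
      intro j; rw [hθc j]; ring
    rw [Finset.sum_congr rfl (fun j _ => h1 j)]
    rw [← hcol0 i]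
    have h2 : ∑ j : Fin (p-1), -(X i (colIdx j) * g j) / T
        = -(∑ j : Fin (p-1), X i (colIdx j) * g j) / T := by
      rw [← Finset.sum_div, ← Finset.sum_neg_distrib]
    rw [h2]
    have h3 : r i = col0 X i - ∑ j : Fin (p-1), X i (colIdx j) * g j := rfl
    rw [h3]; ring
  have hrow : ∀ jj : Fin p, ∑ k, sigmaHat X jj k * thetaHat X lam g k
      = (1/((n:ℝ)*T)) * ∑ i, X i jj * r i := by
    intro jj
    have h1 : ∀ k : Fin p, sigmaHat X jj k * thetaHat X lam g k
        = (1/(n:ℝ)) * ∑ i, X i jj * (X i k * thetaHat X lam g k) := by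
      intro k
      unfold sigmaHat
      rw [Finset.mul_sum, Finset.mul_sum, Finset.sum_mul]
      exact Finset.sum_congr rfl fun i _ => by ring
    rw [Finset.sum_congr rfl (fun k _ => h1 k), ← Finset.mul_sum, Finset.sum_comm]
    have h2 : ∀ i : Fin n, ∑ k, X i jj * (X i k * thetaHat X lam g k)
        = X i jj * (r i / T) := by
      intro i
      rw [← Finset.mul_sum, hθsum i]
    rw [Finset.sum_congr rfl (fun i _ => h2 i)]
    have h3 : ∑ i, X i jj * (r i / T) = (∑ i, X i jj * r i) / T := by
      rw [Finset.sum_div]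
      exact Finset.sum_congr rfl fun i _ => by ring
    rw [h3]; field_simp
  -- inner product of first column with residual equals T
  have hfirst : (1/(n:ℝ)) * ∑ i, X i ⟨0, hppos⟩ * r i = T := by
    have h1 : ∀ i, X i ⟨0, hppos⟩ * r i
        = (r i)^2 + ∑ j : Fin (p-1), g j * (X i (colIdx j) * r i) := by
      intro i
      have h2 : X i ⟨0, hppos⟩ = r i + ∑ j : Fin (p-1), X i (colIdx j) * g j := by
        rw [← hcol0 i]
        have : r i = col0 X i - ∑ j : Fin (p-1), X i (colIdx j) * g j := rfl
        rw [this]; ring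
      rw [h2, add_mul, Finset.sum_mul]
      congr 1
      · ring
      · exact Finset.sum_congr rfl fun j _ => by ring
    rw [Finset.sum_congr rfl (fun i _ => h1 i), Finset.sum_add_distrib, mul_add,
      Finset.sum_comm]
    have h3 : (1/(n:ℝ)) * ∑ j : Fin (p-1), ∑ i, g j * (X i (colIdx j) * r i)
        = ∑ j : Fin (p-1), g j * a j := by
      rw [Finset.mul_sum]
      refine Finset.sum_congr rfl fun j _ => ?_
      rw [haa, ← Finset.mul_sum]
      ring
    have h4 : ∑ j : Fin (p-1), g j * a j = lam * l1Norm g := by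
      unfold l1Norm
      rw [Finset.mul_sum]
      exact Finset.sum_congr rfl fun j _ => (hkkt j).2
    rw [h3, h4, hT]
    unfold tauHatSq tauTildeSq sqNorm
    rfl
  -- bias vector bound
  have hbias : ∀ jj : Fin p, |biasVec X lam g jj| ≤ lam / T := by
    intro jj
    rcases eq_or_ne jj.1 0 with h0 | h0
    · have hjj : jj = ⟨0, hppos⟩ := Fin.ext h0
      have : biasVec X lam g jj = 0 := by
        unfold biasVec
        rw [hjj, hrow, if_pos rfl]
        have h5 : ∑ i, X i ⟨0, hppos⟩ * r i = (n:ℝ) * T := by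
          field_simp at hfirst
          linarith [hfirst]
        rw [h5]
        field_simp
        norm_num
      rw [this, abs_zero]
      positivity
    · have hj1 : jj.1 - 1 < p - 1 := by have := jj.isLt; omega
      set j : Fin (p-1) := ⟨jj.1 - 1, hj1⟩ with hjdef
      have hjj : jj = colIdx j := by
        apply Fin.ext
        show jj.1 = jj.1 - 1 + 1
        omega
      have : biasVec X lam g jj = a j / T := by
        unfold biasVec
        rw [hrow, if_neg h0, hjj, haa]
        field_simp
        ring
      rw [this, abs_div, abs_of_pos hTpos]
      gcongr
      exact (hkkt j).1
  have hsup : supNorm (biasVec X lam g) ≤ lam / T := by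
    unfold supNorm
    have : Nonempty (Fin p) := ⟨⟨0, hppos⟩⟩
    exact ciSup_le hbias
  -- omegaHat
  have homega : omegaHat X lam g = tauTildeSq X g / T^2 := by
    have h1 : ∀ jj : Fin p, ∑ k, thetaHat X lam g jj * sigmaHat X jj k * thetaHat X lam g k
        = thetaHat X lam g jj * ((1/((n:ℝ)*T)) * ∑ i, X i jj * r i) := by
      intro jj
      rw [← hrow jj, Finset.mul_sum]
      exact Finset.sum_congr rfl fun k _ => by ring
    have h2 : ∀ jj : Fin p, thetaHat X lam g jj * ((1/((n:ℝ)*T)) * ∑ i, X i jj * r i)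
        = (1/((n:ℝ)*T)) * ∑ i, r i * (X i jj * thetaHat X lam g jj) := by
      intro jj
      rw [Finset.mul_sum, Finset.mul_sum, Finset.mul_sum]
      exact Finset.sum_congr rfl fun i _ => by ring
    have h3 : ∀ i : Fin n, ∑ jj : Fin p, r i * (X i jj * thetaHat X lam g jj)
        = r i * (r i / T) := by
      intro i
      rw [← Finset.mul_sum, hθsum i]
    have h4 : ∑ i, r i * (r i / T) = (∑ i, (r i)^2) / T := by
      rw [Finset.sum_div]
      exact Finset.sum_congr rfl fun i _ => by ring
    unfold omegaHat
    calc ∑ jj, ∑ k, thetaHat X lam g jj * sigmaHat X jj k * thetaHat X lam g k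
        = ∑ jj, thetaHat X lam g jj * ((1/((n:ℝ)*T)) * ∑ i, X i jj * r i) :=
          Finset.sum_congr rfl fun jj _ => h1 jj
      _ = ∑ jj, (1/((n:ℝ)*T)) * ∑ i, r i * (X i jj * thetaHat X lam g jj) :=
          Finset.sum_congr rfl fun jj _ => h2 jj
      _ = (1/((n:ℝ)*T)) * ∑ jj, ∑ i, r i * (X i jj * thetaHat X lam g jj) :=
          (Finset.mul_sum _ _ _).symm
      _ = (1/((n:ℝ)*T)) * ∑ i, ∑ jj, r i * (X i jj * thetaHat X lam g jj) := by
          rw [Finset.sum_comm]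
      _ = (1/((n:ℝ)*T)) * ∑ i, r i * (r i / T) := by
          congr 1
          exact Finset.sum_congr rfl fun i _ => h3 i
      _ = (1/((n:ℝ)*T)) * ((∑ i, (r i)^2) / T) := by rw [h4]
      _ = tauTildeSq X g / T^2 := by
          have h5 : tauTildeSq X g = (1/(n:ℝ)) * ∑ i, (r i)^2 := rfl
          rw [h5]
          field_simp [hnpos.ne', hTpos.ne']
  have hsqrtΩ : Real.sqrt (omegaHat X lam g) = Real.sqrt (tauTildeSq X g) / T := by
    rw [homega, Real.sqrt_div hτ.le, Real.sqrt_sq hTpos.le]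
  have hτs : 0 < Real.sqrt (tauTildeSq X g) := Real.sqrt_pos.2 hτ
  unfold biasFactor
  rw [hsqrtΩ]
  calc supNorm (biasVec X lam g) / (Real.sqrt (tauTildeSq X g) / T)
      ≤ (lam / T) / (Real.sqrt (tauTildeSq X g) / T) := by
        have hd : 0 < Real.sqrt (tauTildeSq X g) / T := div_pos hτs hTpos
        gcongr
    _ = lam / Real.sqrt (tauTildeSq X g) := by
        field_simp
/-- the tuning parameter `λ₁` selected by the STPS rule satisfies
`f(λ₁) ≤ max{ λ_min/τ̃(λ_min), (1/√n)·((1/n)‖X₁‖²)^{1/2} }`. -/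
theorem statement16 (n p : ℕ) (hn : 1 ≤ n) (hp : 2 ≤ p)
    (X : Fin n → Fin p → ℝ)
    (Λ : Finset ℝ) (hΛne : Λ.Nonempty) (hΛpos : ∀ l ∈ Λ, 0 < l)
    (ghat : ℝ → Fin (p - 1) → ℝ)
    (hsol : ∀ l ∈ Λ, IsNodewiseSol X l (ghat l))
    (hτpos : ∀ l ∈ Λ, 0 < tauTildeSq X (ghat l))
    (hmax : Λ.max' hΛne = ⨆ j : Fin (p - 1), |∑ i, X i (colIdx j) * col0 X i| / n)
    (hmono : ∀ l ∈ Λ, ∀ m ∈ Λ, l ≤ m →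
      tauTildeSq X (ghat l) ≤ tauTildeSq X (ghat m))
    (hzero : ghat (Λ.max' hΛne) = 0)
    (lamCV : ℝ) (hCV : lamCV ∈ Λ)
    (lam1 : ℝ)
    (hrule :
      ((∀ l ∈ Λ, Real.sqrt (tauTildeSq X (ghat lamCV)) / Real.sqrt n <
          biasFactor X l (ghat l)) ∧ lam1 = Λ.min' hΛne) ∨
      (∃ ls ∈ Λ,
        biasFactor X ls (ghat ls) ≤
          Real.sqrt (tauTildeSq X (ghat lamCV)) / Real.sqrt n ∧
        (∀ l ∈ Λ,
          biasFactor X l (ghat l) ≤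
            Real.sqrt (tauTildeSq X (ghat lamCV)) / Real.sqrt n →
          Real.sqrt (omegaHat X ls (ghat ls)) ≤ Real.sqrt (omegaHat X l (ghat l))) ∧
        lam1 ∈ Λ ∧
        Real.sqrt (omegaHat X lam1 (ghat lam1)) ≤
          1.1 * Real.sqrt (omegaHat X ls (ghat ls)) ∧
        (∀ l ∈ Λ,
          Real.sqrt (omegaHat X l (ghat l)) ≤
            1.1 * Real.sqrt (omegaHat X ls (ghat ls)) →
          biasFactor X lam1 (ghat lam1) ≤ biasFactor X l (ghat l)))) :
    biasFactor X lam1 (ghat lam1) ≤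
      max (Λ.min' hΛne / Real.sqrt (tauTildeSq X (ghat (Λ.min' hΛne))))
        ((1 / Real.sqrt n) * Real.sqrt ((1 / n) * sqNorm (col0 X))) := by
  have hnpos : (0:ℝ) < n := by exact_mod_cast Nat.lt_of_lt_of_le Nat.zero_lt_one hn
  have hsqrtn : 0 < Real.sqrt n := Real.sqrt_pos.2 hnpos
  have hminmem : Λ.min' hΛne ∈ Λ := Λ.min'_mem hΛne
  have hmaxmem : Λ.max' hΛne ∈ Λ := Λ.max'_mem hΛne
  have hτmax : tauTildeSq X (ghat (Λ.max' hΛne)) = (1/(n:ℝ)) * sqNorm (col0 X) := by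
    rw [hzero]
    unfold tauTildeSq
    congr 1
    unfold sqNorm
    exact Finset.sum_congr rfl fun i _ => by simp [nwRes]
  have hCVle : tauTildeSq X (ghat lamCV) ≤ (1/(n:ℝ)) * sqNorm (col0 X) := by
    rw [← hτmax]
    exact hmono lamCV hCV _ hmaxmem (Λ.le_max' lamCV hCV)
  rcases hrule with ⟨_, rfl⟩ | ⟨ls, hls, hfls, _, hlam1, hΩ1, hopt⟩
  · exact le_max_of_le_left
      (biasFactor_le X hn hp (hΛpos _ hminmem) (hsol _ hminmem) (hτpos _ hminmem))
  · have h1 : biasFactor X lam1 (ghat lam1) ≤ biasFactor X ls (ghat ls) := by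
      refine hopt ls hls ?_
      have := Real.sqrt_nonneg (omegaHat X ls (ghat ls))
      nlinarith
    refine le_max_of_le_right ?_
    calc biasFactor X lam1 (ghat lam1)
        ≤ biasFactor X ls (ghat ls) := h1
      _ ≤ Real.sqrt (tauTildeSq X (ghat lamCV)) / Real.sqrt n := hfls
      _ ≤ Real.sqrt ((1/(n:ℝ)) * sqNorm (col0 X)) / Real.sqrt n := by
          gcongr
      _ = (1 / Real.sqrt n) * Real.sqrt ((1/(n:ℝ)) * sqNorm (col0 X)) := by
          exact (one_div_mul_eq_div _ _).symm

end
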